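/- Assume (A1) and (A2). There exists a polynomial p ∈ ℂ[z] of degree n₀ such that e^{−i(n₀+1)ξ} 𝕋₂₂(ξ) = e^{−2iξ} p(e^{−2iξ}) for all ξ ∈ ℂ. Consequently, the algebraic multiplicity of each nonzero eigenvalue λ of 𝒦 (the dimension of the generalized eigenspace ker(𝒦 − λI)^{2(n₀+1)}) is at most n₀. -/

import Mathlib

open Complex Matrix

noncomputable section

/-- states: `ℂ²` -/
abbrev C2 : Type := Fin 2 → ℂ

/-- `P n = |L⟩⟨L| U n` -/
def Pmat (U : ℤ → Matrix (Fin 2) (Fin 2) ℂ) (n : ℤ) : Matrix (Fin 2) (Fin 2) ℂ :=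
  Matrix.of fun i j => if i = 0 then U n 0 j else 0

/-- `Q n = |R⟩⟨R| U n` -/
def Qmat (U : ℤ → Matrix (Fin 2) (Fin 2) ℂ) (n : ℤ) : Matrix (Fin 2) (Fin 2) ℂ :=
  Matrix.of fun i j => if i = 1 then U n 1 j else 0

/-- the time evolution operator `𝒰`: `(𝒰ψ)(n) = P_{n+1}ψ(n+1) + Q_{n-1}ψ(n-1)` -/
def QWop (U : ℤ → Matrix (Fin 2) (Fin 2) ℂ) (ψ : ℤ → C2) : ℤ → C2 :=
  fun n => (Pmat U (n + 1)).mulVec (ψ (n + 1)) + (Qmat U (n - 1)).mulVec (ψ (n - 1))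

/-- all local coins are unitary -/
def CoinsUnitary (U : ℤ → Matrix (Fin 2) (Fin 2) ℂ) : Prop :=
  ∀ n : ℤ, U n ∈ Matrix.unitaryGroup (Fin 2) ℂ

/-- Assumption (A1): `U n = I₂` outside `[n₀] = {0,…,n₀}` -/
def A1 (n0 : ℕ) (U : ℤ → Matrix (Fin 2) (Fin 2) ℂ) : Prop :=
  ∀ n : ℤ, n < 0 ∨ (n0 : ℤ) < n → U n = 1

/-- Assumption (A2): `a n ≠ 0` for all `n` -/
def A2 (U : ℤ → Matrix (Fin 2) (Fin 2) ℂ) : Prop :=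
  ∀ n : ℤ, U n 0 0 ≠ 0

/-- the restriction `𝒦` of `𝒰` to `ℓ²([n₀];ℂ²) ≅ ℂ^{2(n₀+1)}`, as a matrix:
`(𝒦v)(n) = P_{n+1}v(n+1) + Q_{n-1}v(n-1)` with the convention that out-of-range terms vanish. -/
def Kmat (n0 : ℕ) (U : ℤ → Matrix (Fin 2) (Fin 2) ℂ) :
    Matrix (Fin (n0 + 1) × Fin 2) (Fin (n0 + 1) × Fin 2) ℂ :=
  Matrix.of fun p q =>
    (if p.2 = 0 ∧ (q.1 : ℕ) = (p.1 : ℕ) + 1 then U (((p.1 : ℕ) : ℤ) + 1) 0 q.2 else 0) +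
    (if p.2 = 1 ∧ (q.1 : ℕ) + 1 = (p.1 : ℕ) then U ((q.1 : ℕ) : ℤ) 1 q.2 else 0)

/-- `μ` is an eigenvalue of `𝒦` -/
def HasEig (n0 : ℕ) (U : ℤ → Matrix (Fin 2) (Fin 2) ℂ) (μ : ℂ) : Prop :=
  ∃ v : Fin (n0 + 1) × Fin 2 → ℂ, v ≠ 0 ∧ (Kmat n0 U).mulVec v = μ • v

/-- the algebraic multiplicity of `μ` as an eigenvalue of `𝒦`:
`dim ker (𝒦 - μI)^{2(n₀+1)}` -/
def algMult (n0 : ℕ) (U : ℤ → Matrix (Fin 2) (Fin 2) ℂ) (μ : ℂ) : ℕ :=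
  Module.finrank ℂ
    (LinearMap.ker (Matrix.mulVecLin ((Kmat n0 U - μ • 1) ^ (2 * (n0 + 1)))))

/-- `ψ` solves the generalized eigenvalue equation `𝒰ψ = μψ` (pointwise on `ℤ`) -/
def IsSol (U : ℤ → Matrix (Fin 2) (Fin 2) ℂ) (μ : ℂ) (ψ : ℤ → C2) : Prop :=
  ∀ n : ℤ, QWop U ψ n = μ • ψ n

/-- the local transfer matrix `T n ξ` -/
def Tmat (U : ℤ → Matrix (Fin 2) (Fin 2) ℂ) (ξ : ℂ) (n : ℤ) : Matrix (Fin 2) (Fin 2) ℂ :=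
  !![Complex.exp (Complex.I * ξ) / (starRingEnd ℂ) (U n 0 0),
      -((starRingEnd ℂ) (U n 1 0)) / (starRingEnd ℂ) (U n 0 0);
    -(U n 1 0) / U n 1 1, Complex.exp (-(Complex.I * ξ)) / U n 1 1]

/-- the global transfer matrix `𝕋(ξ) = T₀(ξ)T₁(ξ)⋯T_{n₀}(ξ)` -/
def TT (n0 : ℕ) (U : ℤ → Matrix (Fin 2) (Fin 2) ℂ) (ξ : ℂ) : Matrix (Fin 2) (Fin 2) ℂ :=
  ((List.range (n0 + 1)).map fun k => Tmat U ξ (k : ℤ)).prod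

/-- the Wronskian-type determinant `𝒲_n(ψ₁,ψ₂) = det(Π_nψ₁, Π_nψ₂)` where
`Π_nψ = (⟨L|ψ(n)⟩, ⟨R|ψ(n+1)⟩)ᵀ` -/
def Wr (ψ₁ ψ₂ : ℤ → C2) (n : ℤ) : ℂ :=
  ψ₁ n 0 * ψ₂ (n + 1) 1 - ψ₂ n 0 * ψ₁ (n + 1) 1

/-- outgoing state -/
def Outgoing (n0 : ℕ) (ψ : ℤ → C2) : Prop :=
  ∀ n : ℕ, ψ (-(n : ℤ)) 1 = 0 ∧ ψ ((n0 : ℤ) + n) 0 = 0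

/-- member of `ℋ^out_N` -/
def OutgoingFrom (n0 : ℕ) (N : ℕ) (ψ : ℤ → C2) : Prop :=
  ∀ n : ℕ, N ≤ n → ψ (-(n : ℤ)) 1 = 0 ∧ ψ ((n0 : ℤ) + n) 0 = 0

/-- incoming state -/
def Incoming (n0 : ℕ) (φ : ℤ → C2) : Prop :=
  ∀ n : ℕ, φ (-(n : ℤ)) 0 = 0 ∧ φ ((n0 : ℤ) + n) 1 = 0

/-- the pairing `⟨φ, ψ⟩ = Σ_{n∈ℤ} (φ(n), ψ(n))_{ℂ²}` -/
def pairing (φ ψ : ℤ → C2) : ℂ :=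
  ∑' n : ℤ, ∑ i : Fin 2, (starRingEnd ℂ) (φ n i) * ψ n i

/-- restriction of a state to `[n₀]` -/
def resK (n0 : ℕ) (ψ : ℤ → C2) : Fin (n0 + 1) × Fin 2 → ℂ :=
  fun p => ψ ((p.1 : ℕ) : ℤ) p.2

/-- the Jost solution `ψ_out^-(·;ξ)`: solution equal to `e^{-inξ}|L⟩` for `n ≤ -1` -/
def JostOutMinus (U : ℤ → Matrix (Fin 2) (Fin 2) ℂ) (ξ : ℂ) (ψ : ℤ → C2) : Prop :=
  IsSol U (Complex.exp (-(Complex.I * ξ))) ψ ∧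
    ∀ n : ℤ, n ≤ -1 → ψ n = ![Complex.exp (-(Complex.I * (n : ℂ) * ξ)), 0]

/-- the Jost solution `ψ_out^+(·;ξ)`: solution equal to `e^{inξ}|R⟩` for `n ≥ n₀+1` -/
def JostOutPlus (n0 : ℕ) (U : ℤ → Matrix (Fin 2) (Fin 2) ℂ) (ξ : ℂ) (ψ : ℤ → C2) : Prop :=
  IsSol U (Complex.exp (-(Complex.I * ξ))) ψ ∧
    ∀ n : ℤ, (n0 : ℤ) + 1 ≤ n → ψ n = ![0, Complex.exp (Complex.I * (n : ℂ) * ξ)]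

/-- the Jost solution `ψ_in^-(·;ξ)`: solution equal to `e^{inξ}|R⟩` for `n ≤ -1` -/
def JostInMinus (U : ℤ → Matrix (Fin 2) (Fin 2) ℂ) (ξ : ℂ) (ψ : ℤ → C2) : Prop :=
  IsSol U (Complex.exp (-(Complex.I * ξ))) ψ ∧
    ∀ n : ℤ, n ≤ -1 → ψ n = ![0, Complex.exp (Complex.I * (n : ℂ) * ξ)]

/-- the Jost solution `ψ_in^+(·;ξ)`: solution equal to `e^{-inξ}|L⟩` for `n ≥ n₀+1` -/
def JostInPlus (n0 : ℕ) (U : ℤ → Matrix (Fin 2) (Fin 2) ℂ) (ξ : ℂ) (ψ : ℤ → C2) : Prop :=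
  IsSol U (Complex.exp (-(Complex.I * ξ))) ψ ∧
    ∀ n : ℤ, (n0 : ℤ) + 1 ≤ n → ψ n = ![Complex.exp (-(Complex.I * (n : ℂ) * ξ)), 0]


section Stmt9Aux

open Polynomial

lemma exp_mul_exp_neg (ξ : ℂ) :
    Complex.exp (-(Complex.I*ξ)) * Complex.exp (Complex.I*ξ) = 1 := by
  rw [← Complex.exp_add]; simp
lemma exp_sq (ξ : ℂ) :
    Complex.exp (-(Complex.I*ξ)) * Complex.exp (-(Complex.I*ξ)) = Complex.exp (-(2*Complex.I*ξ)) := by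
  rw [← Complex.exp_add]; ring_nf
lemma smul_Tmat (U : ℤ → Matrix (Fin 2) (Fin 2) ℂ) (ξ : ℂ) (n : ℤ) :
    Complex.exp (-(Complex.I*ξ)) • Tmat U ξ n =
    !![((starRingEnd ℂ) (U n 0 0))⁻¹,
       Complex.exp (-(Complex.I*ξ)) * (-((starRingEnd ℂ) (U n 1 0)) / (starRingEnd ℂ) (U n 0 0));
       Complex.exp (-(Complex.I*ξ)) * (-(U n 1 0) / U n 1 1),
       Complex.exp (-(2*Complex.I*ξ)) * (U n 1 1)⁻¹] := by
  ext i j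
  fin_cases i <;> fin_cases j <;>
    simp [Tmat, Matrix.smul_apply, div_eq_mul_inv]
  · rw [← mul_assoc, exp_mul_exp_neg, one_mul]
  · rw [← mul_assoc, exp_sq]

lemma transfer_poly (U : ℤ → Matrix (Fin 2) (Fin 2) ℂ) (m : ℕ) :
    ∃ A B C D : Polynomial ℂ,
      A.natDegree ≤ m ∧ B.natDegree ≤ m ∧ C.natDegree ≤ m ∧ D.natDegree ≤ m ∧
      D.coeff m = ∏ k ∈ Finset.range (m+1), ((U k 1 1)⁻¹ : ℂ) ∧
      ∀ ξ : ℂ,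
        Complex.exp (-(Complex.I * ((m:ℂ)+1) * ξ)) •
            (((List.range (m+1)).map fun k : ℕ => Tmat U ξ (k:ℤ)).prod) =
        !![A.eval (Complex.exp (-(2*Complex.I*ξ))),
           Complex.exp (-(Complex.I*ξ)) * B.eval (Complex.exp (-(2*Complex.I*ξ)));
           Complex.exp (-(Complex.I*ξ)) * C.eval (Complex.exp (-(2*Complex.I*ξ))),
           Complex.exp (-(2*Complex.I*ξ)) * D.eval (Complex.exp (-(2*Complex.I*ξ)))] := by
  induction m with
  | zero =>
    refine ⟨Polynomial.C (((starRingEnd ℂ) (U 0 0 0))⁻¹),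
      Polynomial.C (-((starRingEnd ℂ) (U 0 1 0)) / (starRingEnd ℂ) (U 0 0 0)),
      Polynomial.C (-(U 0 1 0) / U 0 1 1),
      Polynomial.C ((U 0 1 1)⁻¹), by simp, by simp, by simp, by simp, by simp, ?_⟩
    intro ξ
    have := smul_Tmat U ξ 0
    simpa [List.range_succ] using this
  | succ m ih =>
    obtain ⟨A, B, C, D, hA, hB, hC, hD, hcoeff, heq⟩ := ih
    set α : ℂ := ((starRingEnd ℂ) (U (m+1) 0 0))⁻¹ with hα
    set β : ℂ := -((starRingEnd ℂ) (U (m+1) 1 0)) / (starRingEnd ℂ) (U (m+1) 0 0) with hβ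
    set γ : ℂ := -(U (m+1) 1 0) / U (m+1) 1 1 with hγ
    set δ : ℂ := ((U (m+1) 1 1)⁻¹ : ℂ) with hδ
    refine ⟨Polynomial.C α * A + Polynomial.C γ * X * B,
            Polynomial.C β * A + Polynomial.C δ * X * B,
            Polynomial.C α * C + Polynomial.C γ * X * D,
            Polynomial.C β * C + Polynomial.C δ * X * D, ?_, ?_, ?_, ?_, ?_, ?_⟩
    · refine (Polynomial.natDegree_add_le _ _).trans (max_le ?_ ?_)
      · exact (Polynomial.natDegree_mul_le).trans (by simpa using hA.trans (Nat.le_succ m))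
      · refine (Polynomial.natDegree_mul_le).trans ?_
        have := Polynomial.natDegree_mul_le (p := Polynomial.C γ) (q := (X : Polynomial ℂ))
        simp only [Polynomial.natDegree_C, Polynomial.natDegree_X, zero_add] at this ⊢
        omega
    · refine (Polynomial.natDegree_add_le _ _).trans (max_le ?_ ?_)
      · exact (Polynomial.natDegree_mul_le).trans (by simpa using hA.trans (Nat.le_succ m))
      · refine (Polynomial.natDegree_mul_le).trans ?_
        have := Polynomial.natDegree_mul_le (p := Polynomial.C δ) (q := (X : Polynomial ℂ))
        simp only [Polynomial.natDegree_C, Polynomial.natDegree_X, zero_add] at this ⊢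
        omega
    · refine (Polynomial.natDegree_add_le _ _).trans (max_le ?_ ?_)
      · exact (Polynomial.natDegree_mul_le).trans (by simpa using hC.trans (Nat.le_succ m))
      · refine (Polynomial.natDegree_mul_le).trans ?_
        have := Polynomial.natDegree_mul_le (p := Polynomial.C γ) (q := (X : Polynomial ℂ))
        simp only [Polynomial.natDegree_C, Polynomial.natDegree_X, zero_add] at this ⊢
        omega
    · refine (Polynomial.natDegree_add_le _ _).trans (max_le ?_ ?_)
      · exact (Polynomial.natDegree_mul_le).trans (by simpa using hC.trans (Nat.le_succ m))
      · refine (Polynomial.natDegree_mul_le).trans ?_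
        have := Polynomial.natDegree_mul_le (p := Polynomial.C δ) (q := (X : Polynomial ℂ))
        simp only [Polynomial.natDegree_C, Polynomial.natDegree_X, zero_add] at this ⊢
        omega
    · -- coefficient
      have h1 : (Polynomial.C β * C).coeff (m+1) = 0 := by
        rw [Polynomial.coeff_C_mul]
        rw [Polynomial.coeff_eq_zero_of_natDegree_lt (by omega)]
        ring
      have h2 : (Polynomial.C δ * X * D).coeff (m+1) = δ * D.coeff m := by
        rw [mul_assoc, Polynomial.coeff_C_mul, Polynomial.coeff_X_mul]
      rw [Polynomial.coeff_add, h1, h2, zero_add, hcoeff]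
      conv_rhs => rw [Finset.prod_range_succ]
      push_cast
      ring
    · intro ξ
      set w : ℂ := Complex.exp (-(Complex.I*ξ)) with hw
      have hz : Complex.exp (-(2*Complex.I*ξ)) = w^2 := by
        rw [sq]; exact (exp_sq ξ).symm
      have hsplit : Complex.exp (-(Complex.I * ((m:ℂ)+1+1) * ξ)) =
          Complex.exp (-(Complex.I * ((m:ℂ)+1) * ξ)) * w := by
        rw [hw, ← Complex.exp_add]; ring_nf
      have hprod : ((List.range (m+1+1)).map fun k : ℕ => Tmat U ξ (k:ℤ)).prod =
          (((List.range (m+1)).map fun k : ℕ => Tmat U ξ (k:ℤ)).prod) * Tmat U ξ ((m+1 : ℕ) : ℤ) := by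
        rw [List.range_succ, List.map_append, List.prod_append]
        simp
      push_cast
      push_cast at hprod
      rw [hprod, hsplit, mul_smul, ← Matrix.mul_smul, ← Matrix.smul_mul, heq ξ]
      have hsT := smul_Tmat U ξ ((m+1 : ℕ) : ℤ)
      rw [← hw] at hsT
      push_cast at hsT
      rw [hsT, ← hα, ← hβ, ← hγ, ← hδ]
      rw [Matrix.mul_fin_two]
      simp only [hz, hα, hβ, hγ, hδ]
      ext i j
      fin_cases i <;> fin_cases j <;>
        simp only [Matrix.cons_val', Matrix.cons_val_zero, Matrix.cons_val_one, Matrix.head_cons,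
          Matrix.head_fin_const, Matrix.empty_val', Matrix.cons_val_fin_one,
          Polynomial.eval_add, Polynomial.eval_mul, Polynomial.eval_C, Polynomial.eval_X,
          Matrix.of_apply] <;>
        simp only [Fin.zero_eta, Fin.mk_one, Matrix.cons_val_zero, Matrix.cons_val_one,
          Matrix.head_cons, ← hw] <;>
        ring

lemma TT_eq (n0 : ℕ) (U : ℤ → Matrix (Fin 2) (Fin 2) ℂ) (ξ : ℂ) :
    TT n0 U ξ = ((List.range (n0+1)).map fun k : ℕ => Tmat U ξ (k:ℤ)).prod := by
  rw [TT]
  congr 1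
  show List.map _ (List.flatMap (pure ∘ (fun a : ℕ => (a : ℤ))) _) = _
  rw [List.flatMap_pure_eq_map, List.map_map]
  rfl

lemma d_ne_zero {U : Matrix (Fin 2) (Fin 2) ℂ} (hU : U ∈ Matrix.unitaryGroup (Fin 2) ℂ)
    (ha : U 0 0 ≠ 0) : U 1 1 ≠ 0 := by
  have h1 : (U * star U) 0 0 = 1 := by
    rw [(Matrix.mem_unitaryGroup_iff).mp hU]; simp
  have h2 : (star U * U) 1 1 = 1 := by
    rw [(Matrix.mem_unitaryGroup_iff').mp hU]; simp
  rw [Matrix.mul_apply, Fin.sum_univ_two] at h1 h2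
  simp only [Matrix.star_apply, Matrix.conjTranspose_apply, RCLike.star_def] at h1 h2
  intro hd
  rw [hd] at h2
  simp only [map_zero, mul_zero, add_zero] at h2
  -- h1 : U 0 0 * conj (U 0 0) + U 0 1 * conj (U 0 1) = 1
  -- h2 : conj (U 0 1) * U 0 1 = 1
  have h3 : U 0 0 * (starRingEnd ℂ) (U 0 0) = 0 := by
    linear_combination h1 - h2
  rcases mul_eq_zero.mp h3 with h | h
  · exact ha h
  · exact ha (by simpa using congrArg (starRingEnd ℂ) h)

def Dm (n0 : ℕ) : Matrix (Fin (n0 + 1) × Fin 2) (Fin (n0 + 1) × Fin 2) ℂ :=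
  Matrix.diagonal fun p => (-1 : ℂ)^(p.1 : ℕ)

lemma Dm_mul_Dm (n0 : ℕ) : Dm n0 * Dm n0 = 1 := by
  rw [Dm, Matrix.diagonal_mul_diagonal]
  have : (fun p : Fin (n0+1) × Fin 2 => (-1:ℂ)^(p.1:ℕ) * (-1)^(p.1:ℕ)) = fun _ => 1 := by
    funext p
    rw [← pow_add]
    exact Even.neg_one_pow ⟨_, rfl⟩
  rw [this, Matrix.diagonal_one]

lemma K_mul_Dm (n0 : ℕ) (U : ℤ → Matrix (Fin 2) (Fin 2) ℂ) :
    Kmat n0 U * Dm n0 = Dm n0 * (-(Kmat n0 U)) := by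
  ext p q
  rw [Dm, Matrix.mul_diagonal, Matrix.diagonal_mul, Matrix.neg_apply]
  by_cases h0 : Kmat n0 U p q = 0
  · simp [h0]
  · have hidx : (q.1:ℕ) = (p.1:ℕ) + 1 ∨ (q.1:ℕ) + 1 = (p.1:ℕ) := by
      by_contra hc
      push_neg at hc
      apply h0
      simp [Kmat, hc.1, hc.2]
    rcases hidx with h | h
    · rw [h, pow_succ]; ring
    · rw [← h, pow_succ]; ring

lemma conj_pow' (n0 : ℕ) (U : ℤ → Matrix (Fin 2) (Fin 2) ℂ) (μ : ℂ) :
    (Kmat n0 U - μ • 1)^(2*(n0+1)) * Dm n0 = Dm n0 * (Kmat n0 U + μ • 1)^(2*(n0+1)) := by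
  have hsm : (μ • (1 : Matrix (Fin (n0+1) × Fin 2) (Fin (n0+1) × Fin 2) ℂ)) * Dm n0
      = Dm n0 * (μ • 1) := by
    rw [Matrix.smul_mul, Matrix.mul_smul, one_mul, mul_one]
  have h1 : (Kmat n0 U - μ • 1) * Dm n0 = Dm n0 * (-(Kmat n0 U + μ • 1)) := by
    rw [sub_mul, K_mul_Dm, hsm, mul_neg, mul_neg, mul_add]
    abel
  have h2 : ∀ N : ℕ, (Kmat n0 U - μ • 1)^N * Dm n0 = Dm n0 * (-(Kmat n0 U + μ • 1))^N := by
    intro N; induction N with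
    | zero => simp
    | succ N ih =>
      rw [pow_succ, pow_succ, mul_assoc, h1, ← mul_assoc, ih, mul_assoc]
  rw [h2, Even.neg_pow ⟨n0+1, by ring⟩]

lemma finrank_ker_conj {n : Type*} [Fintype n] [DecidableEq n] (A B P : Matrix n n ℂ)
    (h : A * P = P * B) (hP : P * P = 1) :
    Module.finrank ℂ (LinearMap.ker A.mulVecLin)
      = Module.finrank ℂ (LinearMap.ker B.mulVecLin) := by
  have hA : A = P * B * P := by
    calc A = A * (P * P) := by rw [hP, mul_one]
    _ = (A * P) * P := by rw [mul_assoc]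
    _ = P * B * P := by rw [h]
  have hcomp : P.mulVecLin ∘ₗ P.mulVecLin = LinearMap.id := by
    rw [← Matrix.mulVecLin_mul, hP, Matrix.mulVecLin_one]
  let e : (n → ℂ) ≃ₗ[ℂ] (n → ℂ) := LinearEquiv.ofLinear P.mulVecLin P.mulVecLin hcomp hcomp
  have hmaps : A.mulVecLin = e.toLinearMap ∘ₗ (B.mulVecLin ∘ₗ e.toLinearMap) := by
    rw [hA, Matrix.mulVecLin_mul, Matrix.mulVecLin_mul]
    rfl
  rw [hmaps, LinearMap.ker_comp, LinearEquiv.ker, Submodule.comap_bot, LinearMap.ker_comp,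
    Submodule.comap_equiv_eq_map_symm]
  exact LinearEquiv.finrank_map_eq e.symm _

lemma part2 (n0 : ℕ) (U : ℤ → Matrix (Fin 2) (Fin 2) ℂ) (μ : ℂ) (hμ : μ ≠ 0) :
    algMult n0 U μ ≤ n0 := by
  classical
  set F : Module.End ℂ ((Fin (n0+1) × Fin 2) → ℂ) := (Kmat n0 U).mulVecLin with hF
  have hcoe : ∀ M : Matrix (Fin (n0+1) × Fin 2) (Fin (n0+1) × Fin 2) ℂ,
      (Matrix.toLinAlgEquiv' M : ((Fin (n0+1) × Fin 2) → ℂ) →ₗ[ℂ] _) = M.mulVecLin := by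
    intro M; ext v i; rfl
  have hmv : ∀ ν : ℂ, ((Kmat n0 U - ν • 1)^(2*(n0+1))).mulVecLin
      = (((F - ν • 1)^(2*(n0+1)) : Module.End ℂ ((Fin (n0+1) × Fin 2) → ℂ))
          : ((Fin (n0+1) × Fin 2) → ℂ) →ₗ[ℂ] _) := by
    intro ν
    rw [← hcoe, map_pow, map_sub, _root_.map_smul, _root_.map_one, hcoe, ← hF]
  have hkerle : ∀ ν : ℂ,
      LinearMap.ker (((F - ν • 1)^(2*(n0+1)) : Module.End ℂ ((Fin (n0+1) × Fin 2) → ℂ))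
          : ((Fin (n0+1) × Fin 2) → ℂ) →ₗ[ℂ] _) ≤ F.maxGenEigenspace ν := by
    intro ν x hx
    exact (Module.End.mem_maxGenEigenspace F ν x).mpr ⟨2*(n0+1), LinearMap.mem_ker.mp hx⟩
  have hm1 : algMult n0 U μ ≤ Module.finrank ℂ (F.maxGenEigenspace μ) := by
    rw [algMult, hmv μ]
    exact Submodule.finrank_mono (hkerle μ)
  have hm2 : algMult n0 U μ ≤ Module.finrank ℂ (F.maxGenEigenspace (-μ)) := by
    have hconj := conj_pow' n0 U μ
    have heq := finrank_ker_conj _ _ _ hconj (Dm_mul_Dm n0)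
    have hplus : Kmat n0 U + μ • 1 = Kmat n0 U - (-μ) • 1 := by
      rw [neg_smul, sub_neg_eq_add]
    rw [algMult, heq, hplus, hmv (-μ)]
    exact Submodule.finrank_mono (hkerle (-μ))
  have hdim : Module.finrank ℂ ((Fin (n0+1) × Fin 2) → ℂ) = 2*(n0+1) := by
    rw [Module.finrank_fintype_fun_eq_card]
    simp [Fintype.card_prod]
    ring
  -- kernel of F has dimension at least 2
  have hrow1 : ∀ q, Kmat n0 U ⟨Fin.last n0, 0⟩ q = 0 := by
    intro q
    simp only [Kmat, Matrix.of_apply]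
    rw [if_neg, if_neg, add_zero]
    · rintro ⟨h, -⟩
      exact absurd h (by decide)
    · rintro ⟨-, h⟩
      have := q.1.isLt
      rw [Fin.val_last] at h
      omega
  have hrow2 : ∀ q, Kmat n0 U ⟨0, 1⟩ q = 0 := by
    intro q
    simp only [Kmat, Matrix.of_apply]
    rw [if_neg, if_neg, add_zero]
    · rintro ⟨-, h⟩
      simp at h
    · rintro ⟨h, -⟩
      exact absurd h (by decide)
  set ℓ : ((Fin (n0+1) × Fin 2) → ℂ) →ₗ[ℂ] (ℂ × ℂ) :=
    (LinearMap.proj (⟨Fin.last n0, 0⟩ : Fin (n0+1) × Fin 2)).prod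
      (LinearMap.proj ⟨0, 1⟩) with hℓ
  have hrange : LinearMap.range F ≤ LinearMap.ker ℓ := by
    rintro x ⟨v, rfl⟩
    simp only [LinearMap.mem_ker, hℓ, LinearMap.prod_apply, LinearMap.proj_apply, Function.prod,
      hF, Matrix.mulVecLin_apply]
    have e1 : (Kmat n0 U).mulVec v ⟨Fin.last n0, 0⟩ = 0 := by
      simp [Matrix.mulVec, dotProduct, hrow1]
    have e2 : (Kmat n0 U).mulVec v ⟨0, 1⟩ = 0 := by
      simp [Matrix.mulVec, dotProduct, hrow2]
    rw [e1, e2]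
    rfl
  have hsurj : LinearMap.range ℓ = ⊤ := by
    rw [LinearMap.range_eq_top]
    rintro ⟨x, y⟩
    refine ⟨Pi.single (⟨Fin.last n0, 0⟩ : Fin (n0+1) × Fin 2) x
      + Pi.single (⟨0, 1⟩ : Fin (n0+1) × Fin 2) y, ?_⟩
    have hne : (⟨Fin.last n0, 0⟩ : Fin (n0+1) × Fin 2) ≠ ⟨0, 1⟩ := by
      intro h
      have := congrArg Prod.snd h
      simp at this
    simp only [hℓ, LinearMap.prod_apply, LinearMap.proj_apply, Function.prod, Pi.add_apply]
    rw [Pi.single_eq_same, Pi.single_eq_of_ne hne.symm, Pi.single_eq_of_ne hne, Pi.single_eq_same]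
    simp
  have hrn1 := LinearMap.finrank_range_add_finrank_ker ℓ
  have hrn2 := LinearMap.finrank_range_add_finrank_ker (F : ((Fin (n0+1) × Fin 2) → ℂ) →ₗ[ℂ] _)
  rw [hsurj, finrank_top] at hrn1
  have hCC : Module.finrank ℂ (ℂ × ℂ) = 2 := by simp
  have hrle : Module.finrank ℂ (LinearMap.range F) ≤ Module.finrank ℂ (LinearMap.ker ℓ) :=
    Submodule.finrank_mono hrange
  have hker2 : 2 ≤ Module.finrank ℂ (LinearMap.ker F) := by omega
  have hker0 : LinearMap.ker F ≤ F.maxGenEigenspace 0 := by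
    intro x hx
    refine (Module.End.mem_maxGenEigenspace F 0 x).mpr ⟨1, ?_⟩
    simpa using LinearMap.mem_ker.mp hx
  have hm0 : 2 ≤ Module.finrank ℂ (F.maxGenEigenspace 0) :=
    hker2.trans (Submodule.finrank_mono hker0)
  -- independence
  have hind := Module.End.independent_maxGenEigenspace F
  have hμne : μ ≠ -μ := fun h => hμ (CharZero.eq_neg_self_iff.mp h)
  have d1 : Disjoint (F.maxGenEigenspace μ) (F.maxGenEigenspace (-μ)) :=
    Module.End.disjoint_genEigenspace F hμne ⊤ ⊤
  have hsup : F.maxGenEigenspace μ ⊔ F.maxGenEigenspace (-μ)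
      ≤ ⨆ ν, ⨆ _ : ν ≠ (0:ℂ), F.maxGenEigenspace ν :=
    sup_le (le_biSup _ hμ) (le_biSup _ (neg_ne_zero.mpr hμ))
  have d2 : Disjoint (F.maxGenEigenspace 0)
      (F.maxGenEigenspace μ ⊔ F.maxGenEigenspace (-μ)) :=
    (hind 0).mono_right hsup
  have hAB := Submodule.finrank_sup_add_finrank_inf_eq
    (F.maxGenEigenspace μ) (F.maxGenEigenspace (-μ))
  rw [d1.eq_bot, finrank_bot] at hAB
  have hABC := Submodule.finrank_sup_add_finrank_inf_eq
    (F.maxGenEigenspace μ ⊔ F.maxGenEigenspace (-μ)) (F.maxGenEigenspace 0)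
  rw [d2.symm.eq_bot, finrank_bot] at hABC
  have htot := Submodule.finrank_le
    ((F.maxGenEigenspace μ ⊔ F.maxGenEigenspace (-μ)) ⊔ F.maxGenEigenspace 0)
  rw [hdim] at htot
  omega

end Stmt9Aux

/-- `e^{-i(n₀+1)ξ}𝕋₂₂(ξ) = e^{-2iξ}p(e^{-2iξ})` for a polynomial `p`
of degree `n₀`; the algebraic multiplicity of each resonance is at most `n₀`. -/
theorem stmt_9 (n0 : ℕ) (U : ℤ → Matrix (Fin 2) (Fin 2) ℂ)
    (hU : CoinsUnitary U) (hA1 : A1 n0 U) (hA2 : A2 U) :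
    (∃ p : Polynomial ℂ, p.degree = (n0 : ℕ) ∧
      ∀ ξ : ℂ, Complex.exp (-(Complex.I * ((n0 : ℂ) + 1) * ξ)) * TT n0 U ξ 1 1 =
        Complex.exp (-(2 * Complex.I * ξ)) *
          p.eval (Complex.exp (-(2 * Complex.I * ξ)))) ∧
    ∀ μ : ℂ, μ ≠ 0 → HasEig n0 U μ → algMult n0 U μ ≤ n0 := by
  constructor
  · obtain ⟨A, B, C, D, hA, hB, hC, hD, hcoeff, heq⟩ := transfer_poly U n0
    have hcoef0 : D.coeff n0 ≠ 0 := by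
      rw [hcoeff]
      exact Finset.prod_ne_zero_iff.mpr fun k _ => inv_ne_zero (d_ne_zero (hU k) (hA2 k))
    refine ⟨D, ?_, ?_⟩
    · refine le_antisymm ?_ (Polynomial.le_degree_of_ne_zero hcoef0)
      exact Polynomial.degree_le_natDegree.trans (by exact_mod_cast hD)
    · intro ξ
      have h := congrArg (fun M : Matrix (Fin 2) (Fin 2) ℂ => M 1 1) (heq ξ)
      simp only [Matrix.smul_apply, smul_eq_mul] at h
      rw [TT_eq, h]
      simp
  · intro μ hμ _
    exact part2 n0 U μ hμ
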